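/- arXiv:1103.4822 — 4 statements merged into one kernel-verified Lean document; each statement's English description precedes it below -/
import Mathlib

section
/- Let w : 𝕋 → ℂ be C¹, m = m(w), and u = e^{iJ(w)} w with (d/dx)J(w) = |w|² − m. Define the DNLS Hamiltonian H(u) = Im∫₀^{2π} u \bar{u_x} dx + (1/2)∫₀^{2π}|u|⁴ dx. Then H(u) = Im∫₀^{2π} w \bar{w_x} dx − (1/2)∫₀^{2π}|w|⁴ dx + 2π m². -/
open MeasureTheory

/-- The mass `m(w) = (1/2π) ∫₀^{2π} |w|² dx`. -/
noncomputable def mass (w : ℝ → ℂ) : ℝ :=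
  (1 / (2 * Real.pi)) * ∫ y in (0:ℝ)..(2 * Real.pi), ‖w y‖ ^ 2

/-- Transformation of the DNLS Hamiltonian
`H(u) = Im ∫ u ū_x + (1/2) ∫ |u|⁴` under the gauge:
`H(u) = Im ∫ w w̄_x − (1/2) ∫ |w|⁴ + 2π m²`. -/
theorem stmt7 (w w' : ℝ → ℂ) (hw : ∀ x, HasDerivAt w (w' x) x)
    (hw' : Continuous w') (hper : Function.Periodic w (2 * Real.pi))
    (m : ℝ) (hm : m = mass w)
    (J : ℝ → ℝ) (hJ : ∀ x, HasDerivAt J (‖w x‖ ^ 2 - m) x)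
    (u : ℝ → ℂ) (hu : ∀ x, u x = Complex.exp (Complex.I * (J x : ℂ)) * w x) :
    (∫ x in (0:ℝ)..(2 * Real.pi), (u x * (starRingEnd ℂ) (deriv u x)).im)
      + (1 / 2) * ∫ x in (0:ℝ)..(2 * Real.pi), ‖u x‖ ^ 4
    = (∫ x in (0:ℝ)..(2 * Real.pi), (w x * (starRingEnd ℂ) (w' x)).im)
      - (1 / 2) * (∫ x in (0:ℝ)..(2 * Real.pi), ‖w x‖ ^ 4)
      + 2 * Real.pi * m ^ 2 := by
  have hwc : Continuous w := continuous_iff_continuousAt.mpr fun x => (hw x).continuousAt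
  -- derivative of u
  have hE : ∀ x, HasDerivAt (fun y => Complex.exp (Complex.I * (J y : ℂ)))
      (Complex.exp (Complex.I * (J x : ℂ)) * (Complex.I * ((‖w x‖ ^ 2 - m : ℝ) : ℂ))) x := by
    intro x
    have h1 : HasDerivAt (fun y => ((J y : ℝ) : ℂ)) ((‖w x‖ ^ 2 - m : ℝ) : ℂ) x :=
      (hJ x).ofReal_comp
    exact (h1.const_mul Complex.I).cexp
  have hueq : u = fun x => Complex.exp (Complex.I * (J x : ℂ)) * w x := funext hu
  have hU : ∀ x, HasDerivAt u
      (Complex.exp (Complex.I * (J x : ℂ)) * (Complex.I * ((‖w x‖ ^ 2 - m : ℝ) : ℂ)) * w x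
        + Complex.exp (Complex.I * (J x : ℂ)) * w' x) x := by
    intro x
    rw [hueq]
    exact (hE x).mul (hw x)
  have hderiv : ∀ x, deriv u x =
      Complex.exp (Complex.I * (J x : ℂ)) * (Complex.I * ((‖w x‖ ^ 2 - m : ℝ) : ℂ)) * w x
        + Complex.exp (Complex.I * (J x : ℂ)) * w' x := fun x => (hU x).deriv
  -- pointwise identity for the first integrand
  have hnormu : ∀ x, ‖u x‖ = ‖w x‖ := by
    intro x
    rw [hu x, norm_mul, Complex.norm_exp]
    simp
  have key : ∀ x, (u x * (starRingEnd ℂ) (deriv u x)).im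
      = (w x * (starRingEnd ℂ) (w' x)).im - (‖w x‖ ^ 2 - m) * ‖w x‖ ^ 2 := by
    intro x
    rw [hderiv x, hu x]
    set t : ℂ := Complex.I * (J x : ℂ) with ht
    have hconj : (starRingEnd ℂ) (Complex.exp t) = Complex.exp (-t) := by
      rw [← Complex.exp_conj]
      congr 1
      simp [ht]
    have hee : Complex.exp t * Complex.exp (-t) = 1 := by
      rw [← Complex.exp_add]; simp
    have hmul : Complex.exp t * w x * (starRingEnd ℂ)
        (Complex.exp t * (Complex.I * ((‖w x‖ ^ 2 - m : ℝ) : ℂ)) * w x + Complex.exp t * w' x)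
        = w x * (starRingEnd ℂ) (w' x)
          - Complex.I * ((‖w x‖ ^ 2 - m : ℝ) : ℂ) * ((‖w x‖ ^ 2 : ℝ) : ℂ) := by
      simp only [map_mul, map_add, hconj, Complex.conj_I, Complex.conj_ofReal]
      have hwconj : w x * (starRingEnd ℂ) (w x) = ((‖w x‖ ^ 2 : ℝ) : ℂ) := by
        rw [Complex.mul_conj]
        norm_cast
        rw [Complex.normSq_eq_norm_sq]
      calc Complex.exp t * w x * (Complex.exp (-t) * (-Complex.I * ((‖w x‖ ^ 2 - m : ℝ) : ℂ)) *
              (starRingEnd ℂ) (w x) + Complex.exp (-t) * (starRingEnd ℂ) (w' x))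
          = (Complex.exp t * Complex.exp (-t)) *
              ((-Complex.I * ((‖w x‖ ^ 2 - m : ℝ) : ℂ)) * (w x * (starRingEnd ℂ) (w x))
                + w x * (starRingEnd ℂ) (w' x)) := by ring
        _ = _ := by rw [hee, hwconj]; ring
    rw [hmul]
    simp only [Complex.sub_im, Complex.mul_im, Complex.mul_re, Complex.I_re, Complex.I_im,
      Complex.ofReal_re, Complex.ofReal_im]
    ring
  have hm2 : (∫ x in (0:ℝ)..(2 * Real.pi), ‖w x‖ ^ 2) = 2 * Real.pi * m := by
    rw [hm, mass]
    have hπ : (2 * Real.pi) ≠ 0 := by positivity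
    field_simp
  -- integrability
  have hc2 : Continuous fun x => ‖w x‖ ^ 2 := (hwc.norm.pow 2)
  have hc4 : Continuous fun x => ‖w x‖ ^ 4 := (hwc.norm.pow 4)
  have hcim : Continuous fun x => (w x * (starRingEnd ℂ) (w' x)).im :=
    (Complex.continuous_im.comp (hwc.mul (Complex.continuous_conj.comp hw')))
  have hi1 : IntervalIntegrable (fun x => (w x * (starRingEnd ℂ) (w' x)).im) volume 0 (2*Real.pi) :=
    hcim.intervalIntegrable _ _
  have hi2 : IntervalIntegrable (fun x => (‖w x‖ ^ 2 - m) * ‖w x‖ ^ 2) volume 0 (2*Real.pi) :=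
    (((hc2.sub continuous_const).mul hc2)).intervalIntegrable _ _
  have hi4 : IntervalIntegrable (fun x => ‖w x‖ ^ 4) volume 0 (2*Real.pi) :=
    hc4.intervalIntegrable _ _
  have hi2' : IntervalIntegrable (fun x => ‖w x‖ ^ 2) volume 0 (2*Real.pi) :=
    hc2.intervalIntegrable _ _
  have e1 : (∫ x in (0:ℝ)..(2 * Real.pi), (u x * (starRingEnd ℂ) (deriv u x)).im)
      = (∫ x in (0:ℝ)..(2 * Real.pi), (w x * (starRingEnd ℂ) (w' x)).im)
        - ∫ x in (0:ℝ)..(2 * Real.pi), (‖w x‖ ^ 2 - m) * ‖w x‖ ^ 2 := by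
    rw [← intervalIntegral.integral_sub hi1 hi2]
    exact intervalIntegral.integral_congr fun x _ => key x
  have e2 : (∫ x in (0:ℝ)..(2 * Real.pi), (‖w x‖ ^ 2 - m) * ‖w x‖ ^ 2)
      = (∫ x in (0:ℝ)..(2 * Real.pi), ‖w x‖ ^ 4) - m * (2 * Real.pi * m) := by
    have : (∫ x in (0:ℝ)..(2 * Real.pi), (‖w x‖ ^ 2 - m) * ‖w x‖ ^ 2)
        = (∫ x in (0:ℝ)..(2 * Real.pi), ‖w x‖ ^ 4)
          - m * ∫ x in (0:ℝ)..(2 * Real.pi), ‖w x‖ ^ 2 := by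
      rw [← intervalIntegral.integral_const_mul, ← intervalIntegral.integral_sub hi4
        (hi2'.const_mul m)]
      apply intervalIntegral.integral_congr
      intro x _
      ring
    rw [this, hm2]
  have e3 : (∫ x in (0:ℝ)..(2 * Real.pi), ‖u x‖ ^ 4)
      = ∫ x in (0:ℝ)..(2 * Real.pi), ‖w x‖ ^ 4 := by
    apply intervalIntegral.integral_congr
    intro x _
    show ‖u x‖ ^ 4 = ‖w x‖ ^ 4
    rw [hnormu x]
  rw [e1, e2, e3]
  ring
end

section
/- Let w : 𝕋 → ℂ be C¹, m = m(w), and u = e^{iJ(w)} w with (d/dx)J(w) = |w|² − m. Define E(u) = ∫|u_x|² dx + (3/2)Im∫ u²\bar{u}\bar{u_x} dx + (1/2)∫|u|⁶ dx. Then E(u) = ∫|w_x|² dx − (1/2)Im∫ w²\bar{w}\bar{w_x} dx + 2m Im∫ w\bar{w_x} dx − (m/2)∫|w|⁴ dx + 2π m³, where all integrals are over [0,2π]. -/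
open MeasureTheory

lemma key8 (z z' : ℂ) (m : ℝ) :
    ‖Complex.I * ((‖z‖^2 - m : ℝ) : ℂ) * z + z'‖ ^ 2
      + (3/2) * ((z^2 * (starRingEnd ℂ) z *
          (starRingEnd ℂ) (Complex.I * ((‖z‖^2 - m : ℝ):ℂ) * z + z')).im)
      + (1/2) * ‖z‖^6
    = ‖z'‖^2 - (1/2) * ((z^2 * (starRingEnd ℂ) z * (starRingEnd ℂ) z').im)
      + 2*m*((z * (starRingEnd ℂ) z').im) - (m/2)*‖z‖^4 + m^2 * ‖z‖^2 := by
  have hn : ∀ v : ℂ, ‖v‖ ^ 2 = v.re ^ 2 + v.im ^ 2 := fun v => by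
    rw [Complex.sq_norm, Complex.normSq_apply]; ring
  have h6 : ‖z‖ ^ 6 = (‖z‖^2) ^ 3 := by ring
  have h4 : ‖z‖ ^ 4 = (‖z‖^2) ^ 2 := by ring
  rw [h6, h4, hn z, hn z', hn]
  simp only [Complex.add_re, Complex.add_im, Complex.mul_re, Complex.mul_im,
    Complex.I_re, Complex.I_im, Complex.ofReal_re, Complex.ofReal_im,
    map_add, map_mul, Complex.conj_re, Complex.conj_im, Complex.conj_I,
    Complex.neg_re, Complex.neg_im, map_pow, pow_two]
  ring

/-- Transformation of the DNLS energy
`E(u) = ∫ |u_x|² + (3/2) Im ∫ u² ū ū_x + (1/2) ∫ |u|⁶` under the gauge: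
`E(u) = ∫ |w_x|² − (1/2) Im ∫ w² w̄ w̄_x + 2m Im ∫ w w̄_x − (m/2) ∫ |w|⁴ + 2π m³`. -/
theorem stmt8 (w w' : ℝ → ℂ) (hw : ∀ x, HasDerivAt w (w' x) x)
    (hw' : Continuous w') (hper : Function.Periodic w (2 * Real.pi))
    (m : ℝ) (hm : m = mass w)
    (J : ℝ → ℝ) (hJ : ∀ x, HasDerivAt J (‖w x‖ ^ 2 - m) x)
    (u : ℝ → ℂ) (hu : ∀ x, u x = Complex.exp (Complex.I * (J x : ℂ)) * w x) :
    (∫ x in (0:ℝ)..(2 * Real.pi), ‖deriv u x‖ ^ 2)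
      + (3 / 2) * (∫ x in (0:ℝ)..(2 * Real.pi),
          ((u x) ^ 2 * (starRingEnd ℂ) (u x) * (starRingEnd ℂ) (deriv u x)).im)
      + (1 / 2) * (∫ x in (0:ℝ)..(2 * Real.pi), ‖u x‖ ^ 6)
    = (∫ x in (0:ℝ)..(2 * Real.pi), ‖w' x‖ ^ 2)
      - (1 / 2) * (∫ x in (0:ℝ)..(2 * Real.pi),
          ((w x) ^ 2 * (starRingEnd ℂ) (w x) * (starRingEnd ℂ) (w' x)).im)
      + 2 * m * (∫ x in (0:ℝ)..(2 * Real.pi), (w x * (starRingEnd ℂ) (w' x)).im)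
      - (m / 2) * (∫ x in (0:ℝ)..(2 * Real.pi), ‖w x‖ ^ 4)
      + 2 * Real.pi * m ^ 3 := by
  set g : ℝ → ℂ := fun x =>
    Complex.exp (Complex.I * (J x : ℂ)) *
      (Complex.I * ((‖w x‖^2 - m : ℝ) : ℂ) * w x + w' x) with hg
  -- continuity facts
  have hwc : Continuous w := continuous_iff_continuousAt.2
    fun x => (hw x).continuousAt
  have hJc : Continuous J := continuous_iff_continuousAt.2
    fun x => (hJ x).continuousAt
  have hec : Continuous fun x => Complex.exp (Complex.I * (J x : ℂ)) :=
    Complex.continuous_exp.comp (continuous_const.mul (Complex.continuous_ofReal.comp hJc))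
  have hgc : Continuous g := by
    apply hec.mul
    exact ((continuous_const.mul (Complex.continuous_ofReal.comp
      ((hwc.norm.pow 2).sub continuous_const))).mul hwc).add hw'
  -- derivative of u
  have hud : ∀ x, HasDerivAt u (g x) x := by
    intro x
    have hJ' : HasDerivAt (fun x => Complex.I * (J x : ℂ))
        (Complex.I * ((‖w x‖^2 - m : ℝ) : ℂ)) x :=
      ((hJ x).ofReal_comp).const_mul Complex.I
    have he : HasDerivAt (fun x => Complex.exp (Complex.I * (J x : ℂ)))
        (Complex.exp (Complex.I * (J x : ℂ)) * (Complex.I * ((‖w x‖^2 - m : ℝ) : ℂ))) x :=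
      hJ'.cexp
    have := (he.mul (hw x))
    have hueq : u = fun x => Complex.exp (Complex.I * (J x : ℂ)) * w x := funext hu
    rw [hueq]
    convert this using 1
    all_goals first | rfl | (rw [hg]; ring)
  have hderiv : deriv u = g := funext fun x => (hud x).deriv
  -- unit modulus facts
  have habs : ∀ x, ‖Complex.exp (Complex.I * (J x : ℂ))‖ = 1 := fun x => by
    rw [Complex.norm_exp]
    simp [Complex.mul_re]
  have hee : ∀ x, Complex.exp (Complex.I * (J x : ℂ)) *
      (starRingEnd ℂ) (Complex.exp (Complex.I * (J x : ℂ))) = 1 := fun x => by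
    rw [← Complex.exp_conj, ← Complex.exp_add]
    simp [Complex.conj_I]
  -- pointwise identity
  have hpt : ∀ x, ‖g x‖ ^ 2
      + (3/2) * ((u x) ^ 2 * (starRingEnd ℂ) (u x) * (starRingEnd ℂ) (g x)).im
      + (1/2) * ‖u x‖ ^ 6
    = ‖w' x‖^2 - (1/2) * ((w x)^2 * (starRingEnd ℂ) (w x) * (starRingEnd ℂ) (w' x)).im
      + 2*m*((w x * (starRingEnd ℂ) (w' x)).im) - (m/2)*‖w x‖^4 + m^2 * ‖w x‖^2 := by
    intro x
    have h1 : ‖g x‖ ^ 2 = ‖Complex.I * ((‖w x‖^2 - m : ℝ) : ℂ) * w x + w' x‖ ^ 2 := by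
      rw [hg]; simp only []
      rw [norm_mul, habs x, one_mul]
    have h2 : ‖u x‖ ^ 6 = ‖w x‖ ^ 6 := by
      rw [hu x, norm_mul, habs x, one_mul]
    have h3 : (u x) ^ 2 * (starRingEnd ℂ) (u x) * (starRingEnd ℂ) (g x)
        = (w x)^2 * (starRingEnd ℂ) (w x) *
          (starRingEnd ℂ) (Complex.I * ((‖w x‖^2 - m : ℝ) : ℂ) * w x + w' x) := by
      rw [hu x, hg]
      simp only [map_mul]
      have := hee x
      set e := Complex.exp (Complex.I * (J x : ℂ))
      calc (e * w x) ^ 2 * ((starRingEnd ℂ) e * (starRingEnd ℂ) (w x)) *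
            ((starRingEnd ℂ) e *
              (starRingEnd ℂ) (Complex.I * ((‖w x‖^2 - m : ℝ) : ℂ) * w x + w' x))
          = (e * (starRingEnd ℂ) e) ^ 2 * ((w x)^2 * (starRingEnd ℂ) (w x) *
              (starRingEnd ℂ) (Complex.I * ((‖w x‖^2 - m : ℝ) : ℂ) * w x + w' x)) := by
            ring
        _ = _ := by rw [this]; ring
    rw [h1, h2, h3]
    exact key8 (w x) (w' x) m
  -- integrability
  have int1 : IntervalIntegrable (fun x => ‖g x‖ ^ 2) volume 0 (2*Real.pi) :=
    ((hgc.norm.pow 2)).intervalIntegrable _ _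
  have huc : Continuous u := by
    rw [funext hu]; exact hec.mul hwc
  have int2 : IntervalIntegrable
      (fun x => ((u x) ^ 2 * (starRingEnd ℂ) (u x) * (starRingEnd ℂ) (g x)).im)
      volume 0 (2*Real.pi) := by
    apply Continuous.intervalIntegrable
    exact Complex.continuous_im.comp
      ((((huc.pow 2).mul (Complex.continuous_conj.comp huc)).mul
        (Complex.continuous_conj.comp hgc)))
  have int3 : IntervalIntegrable (fun x => ‖u x‖ ^ 6) volume 0 (2*Real.pi) :=
    ((huc.norm.pow 6)).intervalIntegrable _ _
  have int4 : IntervalIntegrable (fun x => ‖w' x‖ ^ 2) volume 0 (2*Real.pi) :=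
    (hw'.norm.pow 2).intervalIntegrable _ _
  have int5 : IntervalIntegrable
      (fun x => ((w x)^2 * (starRingEnd ℂ) (w x) * (starRingEnd ℂ) (w' x)).im)
      volume 0 (2*Real.pi) := by
    apply Continuous.intervalIntegrable
    exact Complex.continuous_im.comp
      ((((hwc.pow 2).mul (Complex.continuous_conj.comp hwc)).mul
        (Complex.continuous_conj.comp hw')))
  have int6 : IntervalIntegrable (fun x => (w x * (starRingEnd ℂ) (w' x)).im)
      volume 0 (2*Real.pi) := by
    apply Continuous.intervalIntegrable
    exact Complex.continuous_im.comp (hwc.mul (Complex.continuous_conj.comp hw'))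
  have int7 : IntervalIntegrable (fun x => ‖w x‖ ^ 4) volume 0 (2*Real.pi) :=
    (hwc.norm.pow 4).intervalIntegrable _ _
  have int8 : IntervalIntegrable (fun x => ‖w x‖ ^ 2) volume 0 (2*Real.pi) :=
    (hwc.norm.pow 2).intervalIntegrable _ _
  -- mass fact
  have hpi : (2 * Real.pi) ≠ 0 := by positivity
  have hmass : (∫ x in (0:ℝ)..(2 * Real.pi), ‖w x‖ ^ 2) = 2 * Real.pi * m := by
    rw [hm, mass]; field_simp
  rw [hderiv]
  calc (∫ x in (0:ℝ)..(2 * Real.pi), ‖g x‖ ^ 2)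
      + (3 / 2) * (∫ x in (0:ℝ)..(2 * Real.pi),
          ((u x) ^ 2 * (starRingEnd ℂ) (u x) * (starRingEnd ℂ) (g x)).im)
      + (1 / 2) * (∫ x in (0:ℝ)..(2 * Real.pi), ‖u x‖ ^ 6)
      = ∫ x in (0:ℝ)..(2 * Real.pi), (‖g x‖ ^ 2
          + (3/2) * ((u x) ^ 2 * (starRingEnd ℂ) (u x) * (starRingEnd ℂ) (g x)).im
          + (1/2) * ‖u x‖ ^ 6) := by
        rw [intervalIntegral.integral_add (int1.add (int2.const_mul _)) (int3.const_mul _),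
          intervalIntegral.integral_add int1 (int2.const_mul _),
          intervalIntegral.integral_const_mul, intervalIntegral.integral_const_mul]
    _ = ∫ x in (0:ℝ)..(2 * Real.pi), (‖w' x‖^2
          - (1/2) * ((w x)^2 * (starRingEnd ℂ) (w x) * (starRingEnd ℂ) (w' x)).im
          + 2*m*((w x * (starRingEnd ℂ) (w' x)).im) - (m/2)*‖w x‖^4 + m^2 * ‖w x‖^2) := by
        apply intervalIntegral.integral_congr
        intro x _
        exact hpt x
    _ = _ := by
        rw [intervalIntegral.integral_add (((int4.sub (int5.const_mul _)).add
            (int6.const_mul _)).sub (int7.const_mul _)) (int8.const_mul _),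
          intervalIntegral.integral_sub ((int4.sub (int5.const_mul _)).add
            (int6.const_mul _)) (int7.const_mul _),
          intervalIntegral.integral_add (int4.sub (int5.const_mul _)) (int6.const_mul _),
          intervalIntegral.integral_sub int4 (int5.const_mul _),
          intervalIntegral.integral_const_mul, intervalIntegral.integral_const_mul,
          intervalIntegral.integral_const_mul, intervalIntegral.integral_const_mul,
          hmass]
        ring
end

section
/- Let w : 𝕋 → ℂ be C¹, m = m(w), and u = e^{iJ(w)} w with (d/dx)J(w) = |w|² − m. Let N(u) = (3/2)Im∫ u²\bar{u}\bar{u_x} dx + (1/2)∫|u|⁶ dx. Then N(u) = (3/2)Im∫ w²\bar{w}\bar{w_x} dx − ∫|w|⁶ dx + (3m/2)∫|w|⁴ dx, where integrals are over [0,2π]. -/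
open MeasureTheory

/-- Transformation under the gauge of the non-quadratic part of the energy
`N(u) = (3/2) Im ∫ u² ū ū_x + (1/2) ∫ |u|⁶`:
`N(u) = (3/2) Im ∫ w² w̄ w̄_x − ∫ |w|⁶ + (3m/2) ∫ |w|⁴`. -/
theorem stmt10 (w w' : ℝ → ℂ) (hw : ∀ x, HasDerivAt w (w' x) x)
    (hw' : Continuous w') (hper : Function.Periodic w (2 * Real.pi))
    (m : ℝ) (hm : m = mass w)
    (J : ℝ → ℝ) (hJ : ∀ x, HasDerivAt J (‖w x‖ ^ 2 - m) x)
    (u : ℝ → ℂ) (hu : ∀ x, u x = Complex.exp (Complex.I * (J x : ℂ)) * w x) :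
    (3 / 2) * (∫ x in (0:ℝ)..(2 * Real.pi),
        ((u x) ^ 2 * (starRingEnd ℂ) (u x) * (starRingEnd ℂ) (deriv u x)).im)
      + (1 / 2) * (∫ x in (0:ℝ)..(2 * Real.pi), ‖u x‖ ^ 6)
    = (3 / 2) * (∫ x in (0:ℝ)..(2 * Real.pi),
        ((w x) ^ 2 * (starRingEnd ℂ) (w x) * (starRingEnd ℂ) (w' x)).im)
      - (∫ x in (0:ℝ)..(2 * Real.pi), ‖w x‖ ^ 6)
      + (3 * m / 2) * (∫ x in (0:ℝ)..(2 * Real.pi), ‖w x‖ ^ 4) := by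
  have hwc : Continuous w := by
    rw [continuous_iff_continuousAt]; exact fun x => (hw x).continuousAt
  have hueq : u = fun x => Complex.exp (Complex.I * (J x : ℂ)) * w x := funext hu
  -- derivative of u
  have hud : ∀ x, HasDerivAt u
      (Complex.exp (Complex.I * (J x : ℂ)) *
        (Complex.I * ((‖w x‖ ^ 2 - m : ℝ) : ℂ) * w x + w' x)) x := by
    intro x
    have h1 : HasDerivAt (fun x => ((J x : ℂ))) (((‖w x‖ ^ 2 - m : ℝ) : ℂ)) x :=
      (hJ x).ofReal_comp
    have h2 := (h1.const_mul Complex.I).cexp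
    have h3 := h2.mul (hw x)
    rw [hueq]
    convert h3 using 1
    all_goals first | rfl | ring
  have hderiv : ∀ x, deriv u x =
      Complex.exp (Complex.I * (J x : ℂ)) *
        (Complex.I * ((‖w x‖ ^ 2 - m : ℝ) : ℂ) * w x + w' x) := fun x => (hud x).deriv
  -- pointwise identity for the cubic term
  have hpt : ∀ x, ((u x) ^ 2 * (starRingEnd ℂ) (u x) * (starRingEnd ℂ) (deriv u x)).im
      = ((w x) ^ 2 * (starRingEnd ℂ) (w x) * (starRingEnd ℂ) (w' x)).im
        - (‖w x‖ ^ 2 - m) * ‖w x‖ ^ 4 := by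
    intro x
    rw [hderiv x, hu x]
    set e := Complex.exp (Complex.I * (J x : ℂ)) with he
    set c : ℝ := ‖w x‖ ^ 2 - m with hc
    have hce : (starRingEnd ℂ) e = Complex.exp (-(Complex.I * (J x : ℂ))) := by
      rw [he, ← Complex.exp_conj]
      congr 1
      simp [Complex.conj_I]
    have hee : e * (starRingEnd ℂ) e = 1 := by
      rw [hce, he, ← Complex.exp_add]
      simp
    have expand : (e * w x) ^ 2 * (starRingEnd ℂ) (e * w x) *
        (starRingEnd ℂ) (e * (Complex.I * (c : ℂ) * w x + w' x))
        = (e * (starRingEnd ℂ) e) * (e * (starRingEnd ℂ) e) *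
          ((w x) ^ 2 * (starRingEnd ℂ) (w x) *
            ((starRingEnd ℂ) (Complex.I * (c : ℂ) * w x) + (starRingEnd ℂ) (w' x))) := by
      rw [map_mul, map_mul, map_add]
      ring
    rw [expand, hee, one_mul, one_mul]
    have : (w x) ^ 2 * (starRingEnd ℂ) (w x) *
        ((starRingEnd ℂ) (Complex.I * (c : ℂ) * w x) + (starRingEnd ℂ) (w' x))
        = (w x) ^ 2 * (starRingEnd ℂ) (w x) * (starRingEnd ℂ) (w' x)
          + (-Complex.I) * (c : ℂ) * ((w x * (starRingEnd ℂ) (w x)) *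
              (w x * (starRingEnd ℂ) (w x))) := by
      rw [map_mul, map_mul, Complex.conj_I, Complex.conj_ofReal]
      ring
    rw [this]
    have hms : w x * (starRingEnd ℂ) (w x) = ((‖w x‖ ^ 2 : ℝ) : ℂ) := by
      rw [Complex.mul_conj']; norm_cast
    rw [hms]
    have hr : ((‖w x‖ ^ 2 : ℝ) : ℂ) * ((‖w x‖ ^ 2 : ℝ) : ℂ) = ((‖w x‖ ^ 4 : ℝ) : ℂ) := by
      push_cast; ring
    rw [hr]
    have h4 : ((-Complex.I) * (c : ℂ) * ((‖w x‖ ^ 4 : ℝ) : ℂ)).im = -(c * ‖w x‖ ^ 4) := by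
      have : (-Complex.I) * (c : ℂ) * ((‖w x‖ ^ 4 : ℝ) : ℂ)
          = ((-(c * ‖w x‖ ^ 4) : ℝ) : ℂ) * Complex.I := by push_cast; ring
      rw [this, Complex.mul_im, Complex.I_im, Complex.I_re, Complex.ofReal_re, Complex.ofReal_im]; ring
    rw [Complex.add_im, h4, hc]
    ring
  have hnorm : ∀ x, ‖u x‖ = ‖w x‖ := by
    intro x
    rw [hu x, norm_mul]
    have : ‖Complex.exp (Complex.I * (J x : ℂ))‖ = 1 := by
      rw [mul_comm, Complex.norm_exp_ofReal_mul_I]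
    rw [this, one_mul]
  -- integrability facts
  have hiw6 : IntervalIntegrable (fun x => ‖w x‖ ^ 6) volume 0 (2 * Real.pi) :=
    ((hwc.norm.pow 6)).intervalIntegrable _ _
  have hiw4 : IntervalIntegrable (fun x => ‖w x‖ ^ 4) volume 0 (2 * Real.pi) :=
    ((hwc.norm.pow 4)).intervalIntegrable _ _
  have hiIm : IntervalIntegrable
      (fun x => ((w x) ^ 2 * (starRingEnd ℂ) (w x) * (starRingEnd ℂ) (w' x)).im)
      volume 0 (2 * Real.pi) := by
    apply Continuous.intervalIntegrable
    exact Complex.continuous_im.comp (((hwc.pow 2).mul (Complex.continuous_conj.comp hwc)).mul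
      (Complex.continuous_conj.comp hw'))
  have hiC : IntervalIntegrable (fun x => (‖w x‖ ^ 2 - m) * ‖w x‖ ^ 4)
      volume 0 (2 * Real.pi) := by
    apply Continuous.intervalIntegrable
    exact ((hwc.norm.pow 2).sub continuous_const).mul (hwc.norm.pow 4)
  have e1 : (∫ x in (0:ℝ)..(2 * Real.pi),
      ((u x) ^ 2 * (starRingEnd ℂ) (u x) * (starRingEnd ℂ) (deriv u x)).im)
      = (∫ x in (0:ℝ)..(2 * Real.pi),
          ((w x) ^ 2 * (starRingEnd ℂ) (w x) * (starRingEnd ℂ) (w' x)).im)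
        - ∫ x in (0:ℝ)..(2 * Real.pi), (‖w x‖ ^ 2 - m) * ‖w x‖ ^ 4 := by
    rw [← intervalIntegral.integral_sub hiIm hiC]
    exact intervalIntegral.integral_congr fun x _ => hpt x
  have e2 : (∫ x in (0:ℝ)..(2 * Real.pi), ‖u x‖ ^ 6)
      = ∫ x in (0:ℝ)..(2 * Real.pi), ‖w x‖ ^ 6 :=
    intervalIntegral.integral_congr fun x _ => by rw [hnorm x]
  have e3 : (∫ x in (0:ℝ)..(2 * Real.pi), (‖w x‖ ^ 2 - m) * ‖w x‖ ^ 4)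
      = (∫ x in (0:ℝ)..(2 * Real.pi), ‖w x‖ ^ 6)
        - m * ∫ x in (0:ℝ)..(2 * Real.pi), ‖w x‖ ^ 4 := by
    rw [← intervalIntegral.integral_const_mul, ← intervalIntegral.integral_sub hiw6
      ((hiw4.const_mul m))]
    apply intervalIntegral.integral_congr
    intro x _
    ring
  rw [e1, e2, e3]
  ring
end

section
/- Let w : 𝕋 → ℂ be C¹, m = m(w), and u = e^{iJ(w)} w with (d/dx)J(w) = |w|² − m. Then E(u) − 𝓝(w) = ∫₀^{2π}|w_x|² dx, where E(u) = ∫|u_x|² + (3/2)Im∫ u²\bar{u}\bar{u_x} + (1/2)∫|u|⁶ and 𝓝(w) = −(1/2)Im∫ w²\bar{w}\bar{w_x} + 2m Im∫ w\bar{w_x} − (m/2)∫|w|⁴ + 2π m³. -/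
open MeasureTheory

lemma ptwise (a b : ℂ) (m : ℝ) (c : ℂ) (hc : ‖c‖ = 1) :
    ‖c * (Complex.I * ((‖a‖^2 - m : ℝ) : ℂ) * a + b)‖ ^ 2
      + (3/2) * (((c*a)^2 * (starRingEnd ℂ) (c*a)
          * (starRingEnd ℂ) (c * (Complex.I * ((‖a‖^2 - m : ℝ):ℂ) * a + b))).im)
      + (1/2) * ‖c*a‖^6
    = ‖b‖^2 + (-(1/2)) * ((a^2 * (starRingEnd ℂ) a * (starRingEnd ℂ) b).im)
      + (2*m) * ((a * (starRingEnd ℂ) b).im) + (-(m/2)) * ‖a‖^4 + m^2 * ‖a‖^2 := by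
  have hcc : c * (starRingEnd ℂ) c = 1 := by
    rw [Complex.mul_conj]
    norm_cast
    simp [← Complex.sq_norm, hc]
  have h1 : ((c*a)^2 * (starRingEnd ℂ) (c*a)
          * (starRingEnd ℂ) (c * (Complex.I * ((‖a‖^2 - m : ℝ):ℂ) * a + b)))
      = (c * (starRingEnd ℂ) c)^2 * (a^2 * (starRingEnd ℂ) a
          * (starRingEnd ℂ) (Complex.I * ((‖a‖^2 - m : ℝ):ℂ) * a + b)) := by
    simp only [map_mul]; ring
  rw [h1, hcc, one_pow, one_mul, norm_mul, norm_mul, hc, one_mul, one_mul]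
  have hn : ∀ z : ℂ, ‖z‖^2 = z.re^2 + z.im^2 := by
    intro z
    rw [Complex.sq_norm, Complex.normSq_apply]; ring
  have ha4 : ‖a‖^4 = (‖a‖^2)^2 := by ring
  have ha6 : ‖a‖^6 = (‖a‖^2)^3 := by ring
  rw [ha4, ha6, hn a, hn b, hn]
  simp only [Complex.add_re, Complex.add_im, Complex.mul_re, Complex.mul_im,
    Complex.I_re, Complex.I_im, Complex.ofReal_re, Complex.ofReal_im,
    Complex.conj_re, Complex.conj_im, Complex.sub_re, Complex.sub_im, pow_two,
    Complex.one_re, Complex.one_im]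
  ring_nf

lemma int_split3 (a b : ℝ) (f1 f2 f3 : ℝ → ℝ)
    (h1 : IntervalIntegrable f1 volume a b) (h2 : IntervalIntegrable f2 volume a b)
    (h3 : IntervalIntegrable f3 volume a b) :
    ∫ x in a..b, (f1 x + f2 x + f3 x)
      = (∫ x in a..b, f1 x) + (∫ x in a..b, f2 x) + (∫ x in a..b, f3 x) := by
  rw [intervalIntegral.integral_add (h1.add h2) h3, intervalIntegral.integral_add h1 h2]

lemma int_split5 (a b : ℝ) (f1 f2 f3 f4 f5 : ℝ → ℝ)
    (h1 : IntervalIntegrable f1 volume a b) (h2 : IntervalIntegrable f2 volume a b)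
    (h3 : IntervalIntegrable f3 volume a b) (h4 : IntervalIntegrable f4 volume a b)
    (h5 : IntervalIntegrable f5 volume a b) :
    ∫ x in a..b, (f1 x + f2 x + f3 x + f4 x + f5 x)
      = (∫ x in a..b, f1 x) + (∫ x in a..b, f2 x) + (∫ x in a..b, f3 x)
        + (∫ x in a..b, f4 x) + (∫ x in a..b, f5 x) := by
  rw [intervalIntegral.integral_add (((h1.add h2).add h3).add h4) h5,
    intervalIntegral.integral_add ((h1.add h2).add h3) h4,
    intervalIntegral.integral_add (h1.add h2) h3,
    intervalIntegral.integral_add h1 h2]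

/-- With `E(u)` the DNLS energy of `u = e^{iJ(w)} w` and `𝓝(w)` the non-quadratic part of
the gauged energy, `E(u) − 𝓝(w) = ∫₀^{2π} |w_x|² dx`. -/
theorem stmt11 (w w' : ℝ → ℂ) (hw : ∀ x, HasDerivAt w (w' x) x)
    (hw' : Continuous w') (hper : Function.Periodic w (2 * Real.pi))
    (m : ℝ) (hm : m = mass w)
    (J : ℝ → ℝ) (hJ : ∀ x, HasDerivAt J (‖w x‖ ^ 2 - m) x)
    (u : ℝ → ℂ) (hu : ∀ x, u x = Complex.exp (Complex.I * (J x : ℂ)) * w x)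
    (E 𝓝 : ℝ)
    (hE : E = (∫ x in (0:ℝ)..(2 * Real.pi), ‖deriv u x‖ ^ 2)
      + (3 / 2) * (∫ x in (0:ℝ)..(2 * Real.pi),
          ((u x) ^ 2 * (starRingEnd ℂ) (u x) * (starRingEnd ℂ) (deriv u x)).im)
      + (1 / 2) * (∫ x in (0:ℝ)..(2 * Real.pi), ‖u x‖ ^ 6))
    (hN : 𝓝 = - (1 / 2) * (∫ x in (0:ℝ)..(2 * Real.pi),
          ((w x) ^ 2 * (starRingEnd ℂ) (w x) * (starRingEnd ℂ) (w' x)).im)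
      + 2 * m * (∫ x in (0:ℝ)..(2 * Real.pi), (w x * (starRingEnd ℂ) (w' x)).im)
      - (m / 2) * (∫ x in (0:ℝ)..(2 * Real.pi), ‖w x‖ ^ 4)
      + 2 * Real.pi * m ^ 3) :
    E - 𝓝 = ∫ x in (0:ℝ)..(2 * Real.pi), ‖w' x‖ ^ 2 := by
  have hwc : Continuous w := by
    rw [continuous_iff_continuousAt]; exact fun x => (hw x).continuousAt
  have hJc : Continuous J := by
    rw [continuous_iff_continuousAt]; exact fun x => (hJ x).continuousAt
  set g : ℝ → ℂ := fun x => Complex.exp (Complex.I * (J x : ℂ)) with hg_def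
  set v : ℝ → ℂ := fun x => Complex.I * ((‖w x‖^2 - m : ℝ) : ℂ) * w x + w' x with hv_def
  have hgc : Continuous g := by rw [hg_def]; fun_prop
  have hvc : Continuous v := by rw [hv_def]; fun_prop
  have hgnorm : ∀ x, ‖g x‖ = 1 := by
    intro x
    rw [hg_def]
    simp [Complex.norm_exp]
  have hueq : ∀ x, u x = g x * w x := hu
  have hderiv : ∀ x, HasDerivAt u (g x * v x) x := by
    intro x
    have hgx : HasDerivAt g (Complex.I * ((‖w x‖^2 - m : ℝ) : ℂ) * g x) x := by
      have h1 : HasDerivAt (fun y => ((J y : ℂ))) (((‖w x‖^2 - m : ℝ)) : ℂ) x :=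
        (hJ x).ofReal_comp
      have h2 := (h1.const_mul Complex.I).cexp
      convert h2 using 1; ring
    have h3 := hgx.mul (hw x)
    have h4 : HasDerivAt (fun y => g y * w y) (g x * v x) x := by
      refine h3.congr_deriv ?_; rw [hv_def]; ring
    exact h4.congr_of_eventuallyEq (Filter.Eventually.of_forall fun y => hueq y)
  have hderiv_eq : ∀ x, deriv u x = g x * v x := fun x => (hderiv x).deriv
  simp only [hderiv_eq, hueq] at hE
  -- integrability of all pieces
  have i1 : IntervalIntegrable (fun x => ‖g x * v x‖^2) volume 0 (2*Real.pi) :=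
    (Continuous.intervalIntegrable (by fun_prop) _ _)
  have i2 : IntervalIntegrable (fun x => (3/2 : ℝ) * (((g x * w x))^2
      * (starRingEnd ℂ) (g x * w x) * (starRingEnd ℂ) (g x * v x)).im) volume 0 (2*Real.pi) :=
    (Continuous.intervalIntegrable (by fun_prop) _ _)
  have i3 : IntervalIntegrable (fun x => (1/2 : ℝ) * ‖g x * w x‖^6) volume 0 (2*Real.pi) :=
    (Continuous.intervalIntegrable (by fun_prop) _ _)
  have j1 : IntervalIntegrable (fun x => ‖w' x‖^2) volume 0 (2*Real.pi) :=
    (Continuous.intervalIntegrable (by fun_prop) _ _)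
  have j2 : IntervalIntegrable (fun x => (-(1/2) : ℝ) * (((w x))^2
      * (starRingEnd ℂ) (w x) * (starRingEnd ℂ) (w' x)).im) volume 0 (2*Real.pi) :=
    (Continuous.intervalIntegrable (by fun_prop) _ _)
  have j3 : IntervalIntegrable (fun x => (2*m : ℝ) * ((w x) * (starRingEnd ℂ) (w' x)).im)
      volume 0 (2*Real.pi) := (Continuous.intervalIntegrable (by fun_prop) _ _)
  have j4 : IntervalIntegrable (fun x => (-(m/2) : ℝ) * ‖w x‖^4) volume 0 (2*Real.pi) :=
    (Continuous.intervalIntegrable (by fun_prop) _ _)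
  have j5 : IntervalIntegrable (fun x => (m^2 : ℝ) * ‖w x‖^2) volume 0 (2*Real.pi) :=
    (Continuous.intervalIntegrable (by fun_prop) _ _)
  -- the key integrated identity
  have key : ∫ x in (0:ℝ)..(2*Real.pi), (‖g x * v x‖^2
        + (3/2 : ℝ) * (((g x * w x))^2 * (starRingEnd ℂ) (g x * w x)
            * (starRingEnd ℂ) (g x * v x)).im
        + (1/2 : ℝ) * ‖g x * w x‖^6)
      = ∫ x in (0:ℝ)..(2*Real.pi), (‖w' x‖^2
        + (-(1/2) : ℝ) * (((w x))^2 * (starRingEnd ℂ) (w x) * (starRingEnd ℂ) (w' x)).im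
        + (2*m : ℝ) * ((w x) * (starRingEnd ℂ) (w' x)).im
        + (-(m/2) : ℝ) * ‖w x‖^4
        + (m^2 : ℝ) * ‖w x‖^2) := by
    apply intervalIntegral.integral_congr
    intro x _
    have := ptwise (w x) (w' x) m (g x) (hgnorm x)
    rw [hv_def]
    simpa using this
  rw [int_split3 _ _ _ _ _ i1 i2 i3, int_split5 _ _ _ _ _ _ _ j1 j2 j3 j4 j5] at key
  simp only [intervalIntegral.integral_const_mul] at key
  have hmass : ∫ x in (0:ℝ)..(2*Real.pi), ‖w x‖^2 = 2*Real.pi*m := by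
    rw [hm, mass]
    have hpi : (2*Real.pi) ≠ 0 := by positivity
    field_simp
  rw [hmass] at key
  rw [hE, hN]
  rw [key]
  ring
end
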